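/- Let A have restricted isometry constants δ_q. Let ŵ ∈ W^k satisfy supp(x_S) ⊆ supp(ŵ), let x^p ∈ ℝⁿ be k-sparse, u^p = x^p + Aᵀ(y − A x^p), and let w^(1), …, w^(ω) ∈ P^k be successive compression minimizers at x^p. Then for every i = 1, …, ω−1: ‖A[(u^p − x_S) ⊗ (w^(1) ⊗ ⋯ ⊗ w^(i)) ⊗ (e − ŵ)]‖₂ ≤ 2δ_{3k}·√(1+δ_k)·‖x_S − x^p‖₂ + 2√(1+δ_k)·‖Aᵀν'‖₂. -/

import Mathlib

open Finset

noncomputable def nsq {ι : Type*} [Fintype ι] (x : ι → ℝ) : ℝ := ∑ i, (x i) ^ 2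

noncomputable def n2 {ι : Type*} [Fintype ι] (x : ι → ℝ) : ℝ := Real.sqrt (nsq x)

noncomputable def supp {n : ℕ} (x : Fin n → ℝ) : Finset (Fin n) :=
  Finset.univ.filter (fun i => x i ≠ 0)

def Sparse {n : ℕ} (k : ℕ) (x : Fin n → ℝ) : Prop := (supp x).card ≤ k

def restr {n : ℕ} (x : Fin n → ℝ) (T : Finset (Fin n)) : Fin n → ℝ :=
  fun i => if i ∈ T then x i else 0

def SatRIP {m n : ℕ} (A : Matrix (Fin m) (Fin n) ℝ) (q : ℕ) (δ : ℝ) : Prop :=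
  ∀ z : Fin n → ℝ, Sparse q z →
    (1 - δ) * nsq z ≤ nsq (A.mulVec z) ∧ nsq (A.mulVec z) ≤ (1 + δ) * nsq z

/-- `δ` is the `q`-th order restricted isometry constant of `A`:
the smallest `δ' ≥ 0` such that `(1-δ')‖z‖² ≤ ‖Az‖² ≤ (1+δ')‖z‖²` for all `q`-sparse `z`. -/
def IsRIC {m n : ℕ} (A : Matrix (Fin m) (Fin n) ℝ) (q : ℕ) (δ : ℝ) : Prop :=
  IsLeast {δ' : ℝ | 0 ≤ δ' ∧ SatRIP A q δ'} δ

/-- membership in `W^k`: binary vectors with exactly `k` entries equal to 1. -/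
def InW {n : ℕ} (k : ℕ) (w : Fin n → ℝ) : Prop :=
  (∀ i, w i = 0 ∨ w i = 1) ∧ (Finset.univ.filter (fun i => w i = 1)).card = k

/-- membership in the polytope `P^k`. -/
def InP {n : ℕ} (k : ℕ) (w : Fin n → ℝ) : Prop :=
  (∑ i, w i) = (k : ℝ) ∧ ∀ i, 0 ≤ w i ∧ w i ≤ 1

/-- `S` is an index set of the `k` largest absolute entries of `x`. -/
def IsTopK {n : ℕ} (x : Fin n → ℝ) (k : ℕ) (S : Finset (Fin n)) : Prop :=
  S.card = k ∧ ∀ i ∈ S, ∀ j ∉ S, |x j| ≤ |x i|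

/-- `d` is a hard thresholding `H_k(z)` of `z`. -/
def IsHT {n : ℕ} (k : ℕ) (z d : Fin n → ℝ) : Prop :=
  Sparse k d ∧ ∀ d' : Fin n → ℝ, Sparse k d' → n2 (z - d) ≤ n2 (z - d')

/-- `w 0, …, w (ω-1)` are successive compression minimizers at `x^p` (with `u^p = up`). -/
def SCM {m n : ℕ} (A : Matrix (Fin m) (Fin n) ℝ) (y : Fin m → ℝ) (k ω : ℕ)
    (up : Fin n → ℝ) (w : ℕ → Fin n → ℝ) : Prop :=
  ∀ j < ω, InP k (w j) ∧ ∀ v : Fin n → ℝ, InP k v →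
    n2 (y - A.mulVec (up * (∏ l ∈ Finset.range j, w l) * w j)) ≤
    n2 (y - A.mulVec (up * (∏ l ∈ Finset.range j, w l) * v))

/-- the `ℓ∞` norm of `x` restricted to `T` (zero if `T` is empty). -/
noncomputable def linfT {n : ℕ} (x : Fin n → ℝ) (T : Finset (Fin n)) : ℝ :=
  if h : T.Nonempty then T.sup' h (fun j => |x j|) else 0

namespace Stmt8Aux

noncomputable def dot {ι : Type*} [Fintype ι] (f g : ι → ℝ) : ℝ := ∑ i, f i * g i

variable {ι : Type*} [Fintype ι]

lemma nsq_nonneg (f : ι → ℝ) : 0 ≤ nsq f := Finset.sum_nonneg fun i _ => sq_nonneg _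

lemma n2_nonneg (f : ι → ℝ) : 0 ≤ n2 f := Real.sqrt_nonneg _

lemma n2_sq (f : ι → ℝ) : n2 f ^ 2 = nsq f := Real.sq_sqrt (nsq_nonneg f)

lemma nsq_mono {f g : ι → ℝ} (h : ∀ i, |f i| ≤ |g i|) : nsq f ≤ nsq g :=
  Finset.sum_le_sum fun i _ => by
    rw [← sq_abs (f i), ← sq_abs (g i)]
    exact pow_le_pow_left₀ (abs_nonneg _) (h i) 2

lemma n2_mono {f g : ι → ℝ} (h : ∀ i, |f i| ≤ |g i|) : n2 f ≤ n2 g :=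
  Real.sqrt_le_sqrt (nsq_mono h)

lemma nsq_eq_zero {f : ι → ℝ} (h : nsq f = 0) : f = 0 := by
  funext i
  have := (Finset.sum_eq_zero_iff_of_nonneg (fun i _ => sq_nonneg (f i))).1 h i (Finset.mem_univ i)
  exact pow_eq_zero_iff (by norm_num) |>.1 this

lemma dot_le (f g : ι → ℝ) : dot f g ≤ n2 f * n2 g := by
  have h2 : (dot f g) ^ 2 ≤ nsq f * nsq g := by
    simpa [dot, nsq] using Finset.sum_mul_sq_le_sq_mul_sq Finset.univ f g
  calc dot f g ≤ |dot f g| := le_abs_self _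
    _ = Real.sqrt ((dot f g) ^ 2) := (Real.sqrt_sq_eq_abs _).symm
    _ ≤ Real.sqrt (nsq f * nsq g) := Real.sqrt_le_sqrt h2
    _ = n2 f * n2 g := by rw [Real.sqrt_mul (nsq_nonneg f)]; rfl

lemma nsq_add (f g : ι → ℝ) : nsq (f + g) = nsq f + 2 * dot f g + nsq g := by
  simp only [nsq, dot, Pi.add_apply, Finset.mul_sum, ← Finset.sum_add_distrib]
  exact Finset.sum_congr rfl fun i _ => by ring

lemma nsq_sub (f g : ι → ℝ) : nsq (f - g) = nsq f - 2 * dot f g + nsq g := by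
  simp only [nsq, dot, Pi.sub_apply, Finset.mul_sum]
  rw [← Finset.sum_sub_distrib, ← Finset.sum_add_distrib]
  exact Finset.sum_congr rfl fun i _ => by ring

lemma n2_add_le (f g : ι → ℝ) : n2 (f + g) ≤ n2 f + n2 g := by
  have h1 : nsq (f + g) ≤ (n2 f + n2 g) ^ 2 := by
    rw [nsq_add]
    have hd := dot_le f g
    have hf := n2_sq f
    have hg := n2_sq g
    nlinarith
  calc n2 (f + g) = Real.sqrt (nsq (f + g)) := rfl
    _ ≤ Real.sqrt ((n2 f + n2 g) ^ 2) := Real.sqrt_le_sqrt h1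
    _ = n2 f + n2 g := Real.sqrt_sq (add_nonneg (n2_nonneg f) (n2_nonneg g))

lemma nsq_neg (f : ι → ℝ) : nsq (-f) = nsq f := by
  simp [nsq]

lemma n2_neg (f : ι → ℝ) : n2 (-f) = n2 f := by
  unfold n2; rw [nsq_neg]



lemma mem_supp {n : ℕ} {f : Fin n → ℝ} {i : Fin n} : i ∈ supp f ↔ f i ≠ 0 := by
  simp [supp]

lemma supp_subset {n : ℕ} {f : Fin n → ℝ} {U : Finset (Fin n)}
    (h : ∀ i, f i ≠ 0 → i ∈ U) : supp f ⊆ U := fun i hi => h i (mem_supp.1 hi)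

lemma dot_mulVec {m n : ℕ} (A : Matrix (Fin m) (Fin n) ℝ) (u : Fin n → ℝ) (v : Fin m → ℝ) :
    dot (A.mulVec u) v = dot u (A.transpose.mulVec v) := by
  simp only [dot, Matrix.mulVec, dotProduct, Matrix.transpose_apply,
    Finset.sum_mul, Finset.mul_sum]
  rw [Finset.sum_comm]
  exact Finset.sum_congr rfl fun i _ => Finset.sum_congr rfl fun j _ => by ring

lemma n2_mulVec_le {m n q : ℕ} {A : Matrix (Fin m) (Fin n) ℝ} {δ : ℝ}
    (hR : SatRIP A q δ) (hδ : 0 ≤ δ) {z : Fin n → ℝ} (hz : Sparse q z) :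
    n2 (A.mulVec z) ≤ Real.sqrt (1 + δ) * n2 z := by
  have h := (hR z hz).2
  calc n2 (A.mulVec z) = Real.sqrt (nsq (A.mulVec z)) := rfl
    _ ≤ Real.sqrt ((1 + δ) * nsq z) := Real.sqrt_le_sqrt h
    _ = Real.sqrt (1 + δ) * n2 z := by rw [Real.sqrt_mul (by linarith)]; rfl

lemma polar_nsq {m n q : ℕ} {A : Matrix (Fin m) (Fin n) ℝ} {δ : ℝ}
    (hR : SatRIP A q δ) {u v : Fin n → ℝ}
    (h1 : Sparse q (u + v)) (h2 : Sparse q (u - v)) :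
    dot u v - dot (A.mulVec u) (A.mulVec v) ≤ δ / 2 * (nsq u + nsq v) := by
  have e1 : nsq (A.mulVec (u + v))
      = nsq (A.mulVec u) + 2 * dot (A.mulVec u) (A.mulVec v) + nsq (A.mulVec v) := by
    rw [Matrix.mulVec_add, nsq_add]
  have e2 : nsq (A.mulVec (u - v))
      = nsq (A.mulVec u) - 2 * dot (A.mulVec u) (A.mulVec v) + nsq (A.mulVec v) := by
    rw [Matrix.mulVec_sub, nsq_sub]
  have e3 := nsq_add u v
  have e4 := nsq_sub u v
  have r1 := (hR _ h1).1
  have r2 := (hR _ h2).2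
  rw [e1, e3] at r1
  rw [e2, e4] at r2
  nlinarith [r1, r2]

lemma smul_supp {n : ℕ} (c : ℝ) (f : Fin n → ℝ) : supp (fun i => c * f i) ⊆ supp f := by
  refine supp_subset fun i hi => mem_supp.2 fun h0 => hi ?_
  rw [h0, mul_zero]

lemma nsq_smul (c : ℝ) (f : ι → ℝ) : nsq (fun i => c * f i) = c ^ 2 * nsq f := by
  simp only [nsq, Finset.mul_sum]
  exact Finset.sum_congr rfl fun i _ => by ring

lemma dot_smul (c d : ℝ) (f g : ι → ℝ) :
    dot (fun i => c * f i) (fun i => d * g i) = c * d * dot f g := by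
  simp only [dot, Finset.mul_sum]
  exact Finset.sum_congr rfl fun i _ => by ring

lemma mulVec_smul' {m n : ℕ} (A : Matrix (Fin m) (Fin n) ℝ) (c : ℝ) (u : Fin n → ℝ) :
    A.mulVec (fun i => c * u i) = fun i => c * A.mulVec u i := by
  funext i
  simp only [Matrix.mulVec, dotProduct, Finset.mul_sum]
  exact Finset.sum_congr rfl fun j _ => by ring

lemma polar {m n q : ℕ} {A : Matrix (Fin m) (Fin n) ℝ} {δ : ℝ}
    (hR : SatRIP A q δ) (hδ : 0 ≤ δ) {u v : Fin n → ℝ}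
    (hcard : (supp u ∪ supp v).card ≤ q) :
    dot u v - dot (A.mulVec u) (A.mulVec v) ≤ δ * n2 u * n2 v := by
  have hsp : ∀ (c d : ℝ), Sparse q ((fun i => c * u i) + fun i => d * v i) := by
    intro c d
    refine le_trans (Finset.card_le_card ?_) hcard
    refine supp_subset fun i hi => ?_
    by_cases h1 : u i = 0
    · have h2 : v i ≠ 0 := by
        intro h2; apply hi; simp [h1, h2]
      exact Finset.mem_union_right _ (mem_supp.2 h2)
    · exact Finset.mem_union_left _ (mem_supp.2 h1)
  by_cases hu : nsq u = 0
  · have h0 : u = 0 := nsq_eq_zero hu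
    subst h0
    simp [dot, Matrix.mulVec_zero, n2, nsq]
  by_cases hv : nsq v = 0
  · have h0 : v = 0 := nsq_eq_zero hv
    subst h0
    simp [dot, Matrix.mulVec_zero, n2, nsq]
  have hau : 0 < n2 u := Real.sqrt_pos.2 (lt_of_le_of_ne (nsq_nonneg u) (Ne.symm hu))
  have hav : 0 < n2 v := Real.sqrt_pos.2 (lt_of_le_of_ne (nsq_nonneg v) (Ne.symm hv))
  set a := n2 u
  set b := n2 v
  have key := polar_nsq hR (u := fun i => a⁻¹ * u i) (v := fun i => b⁻¹ * v i)
    (hsp a⁻¹ b⁻¹) (by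
      have : ((fun i => a⁻¹ * u i) - fun i => b⁻¹ * v i)
          = ((fun i => a⁻¹ * u i) + fun i => (-b⁻¹) * v i) := by
        funext i; simp [Pi.sub_apply]; ring
      rw [this]; exact hsp a⁻¹ (-b⁻¹))
  rw [mulVec_smul' A a⁻¹ u, mulVec_smul' A b⁻¹ v, dot_smul, dot_smul,
    nsq_smul, nsq_smul] at key
  have hns_u : nsq u = a ^ 2 := (n2_sq u).symm
  have hns_v : nsq v = b ^ 2 := (n2_sq v).symm
  rw [hns_u, hns_v] at key
  have ha' : a⁻¹ ^ 2 * a ^ 2 = 1 := by field_simp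
  have hb' : b⁻¹ ^ 2 * b ^ 2 = 1 := by field_simp
  rw [ha', hb'] at key
  -- key : a⁻¹*b⁻¹*dot u v - a⁻¹*b⁻¹*dot Au Av ≤ δ/2 * (1+1)
  have hab : 0 < a * b := mul_pos hau hav
  have key2 : a⁻¹ * b⁻¹ * (dot u v - dot (A.mulVec u) (A.mulVec v)) ≤ δ := by
    calc a⁻¹ * b⁻¹ * (dot u v - dot (A.mulVec u) (A.mulVec v))
        = a⁻¹ * b⁻¹ * dot u v - a⁻¹ * b⁻¹ * dot (A.mulVec u) (A.mulVec v) := by ring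
      _ ≤ δ / 2 * (1 + 1) := key
      _ = δ := by ring
  have := mul_le_mul_of_nonneg_left key2 (le_of_lt hab)
  calc dot u v - dot (A.mulVec u) (A.mulVec v)
      = a * b * (a⁻¹ * b⁻¹ * (dot u v - dot (A.mulVec u) (A.mulVec v))) := by
        field_simp
    _ ≤ a * b * δ := this
    _ = δ * a * b := by ring

lemma restr_abs_le {n : ℕ} (f : Fin n → ℝ) (T : Finset (Fin n)) (i : Fin n) :
    |restr f T i| ≤ |f i| := by
  unfold restr
  split_ifs
  · exact le_refl _
  · simp [abs_nonneg]

lemma nsq_restr {n : ℕ} (f : Fin n → ℝ) (T : Finset (Fin n)) :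
    nsq (restr f T) = ∑ i ∈ T, f i ^ 2 := by
  unfold nsq restr
  rw [show ∀ (g : Fin n → ℝ), (∑ i, (if i ∈ T then g i else 0) ^ 2)
      = ∑ i, (if i ∈ T then g i ^ 2 else 0) from fun g =>
    Finset.sum_congr rfl fun i _ => by split_ifs <;> simp]
  rw [Finset.sum_ite_mem, Finset.univ_inter]

lemma lemmaR {m n q : ℕ} {A : Matrix (Fin m) (Fin n) ℝ} {δ : ℝ}
    (hR : SatRIP A q δ) (hδ : 0 ≤ δ) (h : Fin n → ℝ) (T : Finset (Fin n))
    (hc : T.card + (supp h).card ≤ q) :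
    n2 (restr (h - A.transpose.mulVec (A.mulVec h)) T) ≤ δ * n2 h := by
  set z := h - A.transpose.mulVec (A.mulVec h) with hz
  set φ := restr z T with hφ
  have key1 : nsq φ = dot φ z := by
    unfold φ
    rw [nsq_restr]
    unfold dot restr
    rw [show (∑ i, (if i ∈ T then z i else 0) * z i) = ∑ i, (if i ∈ T then z i ^ 2 else 0)
      from Finset.sum_congr rfl fun i _ => by split_ifs <;> ring]
    rw [Finset.sum_ite_mem, Finset.univ_inter]
  have key2 : dot φ z = dot φ h - dot (A.mulVec φ) (A.mulVec h) := by
    have hsplit : dot φ z = dot φ h - dot φ (A.transpose.mulVec (A.mulVec h)) := by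
      unfold z
      unfold dot
      rw [← Finset.sum_sub_distrib]
      exact Finset.sum_congr rfl fun i _ => by simp [Pi.sub_apply]; ring
    rw [hsplit, ← dot_mulVec]
  have hsφ : supp φ ⊆ T := supp_subset fun i hi => by
    by_contra hiT
    exact hi (by unfold φ; simp [restr, hiT])
  have hcard : (supp φ ∪ supp h).card ≤ q := by
    calc (supp φ ∪ supp h).card ≤ (supp φ).card + (supp h).card := Finset.card_union_le _ _
      _ ≤ T.card + (supp h).card := Nat.add_le_add_right (Finset.card_le_card hsφ) _
      _ ≤ q := hc
  have hp := polar hR hδ hcard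
  have hnsq : (n2 φ) ^ 2 ≤ δ * n2 φ * n2 h := by
    rw [n2_sq, key1, key2]; exact hp
  rcases eq_or_lt_of_le (n2_nonneg φ) with h0 | h0
  · rw [← h0]; exact mul_nonneg hδ (n2_nonneg h)
  · nlinarith [n2_nonneg h]



lemma topk {N : ℕ} (c : Fin N → ℝ) :
    ∀ (k : ℕ) (s : Finset (Fin N)), k ≤ s.card →
      ∃ T, T ⊆ s ∧ T.card = k ∧ ∀ i ∈ T, ∀ j ∈ s \ T, c j ≤ c i := by
  intro k
  induction k with
  | zero => exact fun s _ => ⟨∅, Finset.empty_subset _, Finset.card_empty, by simp⟩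
  | succ k ih =>
    intro s hs
    obtain ⟨T, hTs, hTc, hTop⟩ := ih s (Nat.le_of_succ_le hs)
    have hne : (s \ T).Nonempty := by
      rw [← Finset.card_pos, Finset.card_sdiff_of_subset hTs, hTc]
      omega
    obtain ⟨j0, hj0, hmax⟩ := Finset.exists_max_image (s \ T) c hne
    refine ⟨insert j0 T, ?_, ?_, ?_⟩
    · exact Finset.insert_subset (Finset.mem_sdiff.mp hj0).1 hTs
    · rw [Finset.card_insert_of_notMem (Finset.mem_sdiff.mp hj0).2, hTc]
    · intro i hi j hj
      have hj' : j ∈ s \ T :=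
        Finset.sdiff_subset_sdiff (Finset.Subset.refl s) (Finset.subset_insert j0 T) hj
      rcases Finset.mem_insert.mp hi with h | h
      · rw [h]; exact hmax j hj'
      · exact hTop i h j hj'

lemma restr_supp_eq {N : ℕ} (g : Fin N → ℝ) : restr g (supp g) = g := by
  funext i
  by_cases h : g i = 0 <;> simp [restr, supp, h]

/-- small-support case of Needell–Tropp bound -/
lemma NT_small {m n k : ℕ} {A : Matrix (Fin m) (Fin n) ℝ} {δ : ℝ}
    (hk : 0 < k) (hδ : 0 ≤ δ) (hR : SatRIP A k δ) (g : Fin n → ℝ) (M : ℝ)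
    (hM : ∀ T : Finset (Fin n), T.card ≤ k → n2 (restr g T) ≤ M)
    (hsm : (supp g).card ≤ k) :
    n2 (A.mulVec g) ≤ Real.sqrt (1 + δ) * (M + (∑ i, |g i|) / Real.sqrt k) := by
  have h1 : n2 (A.mulVec g) ≤ Real.sqrt (1 + δ) * n2 g := n2_mulVec_le hR hδ hsm
  have h2 : n2 g ≤ M := by
    have := hM (supp g) hsm
    rwa [restr_supp_eq] at this
  have h3 : 0 ≤ (∑ i, |g i|) / Real.sqrt k := by
    apply div_nonneg (Finset.sum_nonneg fun i _ => abs_nonneg _) (Real.sqrt_nonneg _)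
  calc n2 (A.mulVec g) ≤ Real.sqrt (1 + δ) * n2 g := h1
    _ ≤ Real.sqrt (1 + δ) * (M + (∑ i, |g i|) / Real.sqrt k) := by
        apply mul_le_mul_of_nonneg_left _ (Real.sqrt_nonneg _)
        linarith

lemma NT {m n k : ℕ} {A : Matrix (Fin m) (Fin n) ℝ} {δ : ℝ}
    (hk : 0 < k) (hδ : 0 ≤ δ) (hR : SatRIP A k δ) :
    ∀ (Nb : ℕ) (g : Fin n → ℝ) (M : ℝ),
      (supp g).card ≤ Nb →
      (∀ T : Finset (Fin n), T.card ≤ k → n2 (restr g T) ≤ M) →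
      n2 (A.mulVec g) ≤ Real.sqrt (1 + δ) * (M + (∑ i, |g i|) / Real.sqrt k) := by
  intro Nb
  induction Nb with
  | zero =>
    intro g M hcard hM
    exact NT_small hk hδ hR g M hM (le_trans hcard (Nat.zero_le k))
  | succ Nb ih =>
    intro g M hcard hM
    by_cases hsm : (supp g).card ≤ k
    · exact NT_small hk hδ hR g M hM hsm
    push_neg at hsm
    obtain ⟨T, hTs, hTc, hTop⟩ := topk (fun i => |g i|) k (supp g) (le_of_lt hsm)
    set g1 := restr g T with hg1
    set g2 := g - g1 with hg2def
    have hg2 : ∀ i, g2 i = if i ∈ T then 0 else g i := by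
      intro i
      simp only [hg2def, Pi.sub_apply, hg1, restr]
      split_ifs <;> ring
    have hsupp2 : supp g2 = supp g \ T := by
      ext i
      rw [mem_supp, Finset.mem_sdiff, mem_supp, hg2 i]
      split_ifs with h
      · simp [h]
      · simp [h]
    have hcard2 : (supp g2).card ≤ Nb := by
      rw [hsupp2, Finset.card_sdiff_of_subset hTs, hTc]
      omega
    -- minimal element of T
    have hTne : T.Nonempty := by
      rw [← Finset.card_pos, hTc]; exact hk
    obtain ⟨i0, hi0T, hmin⟩ := Finset.exists_min_image T (fun i => |g i|) hTne
    -- pointwise bound on g2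
    have hpt : ∀ i, |g2 i| ≤ |g i0| := by
      intro i
      rw [hg2 i]
      split_ifs with h
      · simp [abs_nonneg]
      · by_cases h0 : g i = 0
        · simp [h0, abs_nonneg]
        · exact hTop i0 hi0T i (Finset.mem_sdiff.mpr ⟨mem_supp.mpr h0, h⟩)
    -- ℓ1 of g1 lower bound
    have hl1T : (k : ℝ) * |g i0| ≤ ∑ i, |g1 i| := by
      have e1 : ∑ i ∈ T, |g i| ≤ ∑ i, |g1 i| := by
        have : ∑ i ∈ T, |g i| = ∑ i ∈ T, |g1 i| :=
          Finset.sum_congr rfl fun i hi => by simp [hg1, restr, hi]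
        rw [this]
        exact Finset.sum_le_sum_of_subset_of_nonneg (Finset.subset_univ T)
          fun i _ _ => abs_nonneg _
      have e2 : (k : ℝ) * |g i0| ≤ ∑ i ∈ T, |g i| := by
        have : ∑ i ∈ T, |g i0| ≤ ∑ i ∈ T, |g i| :=
          Finset.sum_le_sum fun i hi => hmin i hi
        rwa [Finset.sum_const, hTc, nsmul_eq_mul] at this
      linarith
    set M' := (∑ i, |g1 i|) / Real.sqrt k with hM'def
    have hsqk : (0:ℝ) < Real.sqrt k := by
      apply Real.sqrt_pos.mpr
      exact_mod_cast hk
    have hM' : ∀ T' : Finset (Fin n), T'.card ≤ k → n2 (restr g2 T') ≤ M' := by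
      intro T' hT'
      have hn : nsq (restr g2 T') ≤ (k : ℝ) * |g i0| ^ 2 := by
        rw [nsq_restr]
        calc ∑ i ∈ T', g2 i ^ 2 ≤ ∑ _i ∈ T', |g i0| ^ 2 := by
              apply Finset.sum_le_sum
              intro i _
              rw [← sq_abs (g2 i)]
              exact pow_le_pow_left₀ (abs_nonneg _) (hpt i) 2
          _ = (T'.card : ℝ) * |g i0| ^ 2 := by rw [Finset.sum_const, nsmul_eq_mul]
          _ ≤ (k : ℝ) * |g i0| ^ 2 := by
              apply mul_le_mul_of_nonneg_right _ (sq_nonneg _)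
              exact_mod_cast hT'
      have h2 : n2 (restr g2 T') ≤ Real.sqrt k * |g i0| := by
        calc n2 (restr g2 T') = Real.sqrt (nsq (restr g2 T')) := rfl
          _ ≤ Real.sqrt ((k : ℝ) * |g i0| ^ 2) := Real.sqrt_le_sqrt hn
          _ = Real.sqrt k * |g i0| := by
              rw [Real.sqrt_mul (by positivity), Real.sqrt_sq (abs_nonneg _)]
      refine le_trans h2 ?_
      rw [hM'def, le_div_iff₀ hsqk]
      calc Real.sqrt k * |g i0| * Real.sqrt k = (Real.sqrt k * Real.sqrt k) * |g i0| := by ring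
        _ = (k : ℝ) * |g i0| := by rw [Real.mul_self_sqrt (by positivity)]
        _ ≤ ∑ i, |g1 i| := hl1T
    have hIH := ih g2 M' hcard2 hM'
    -- bound for g1 part
    have hspg1 : Sparse k g1 := by
      unfold Sparse
      have : supp g1 ⊆ T := supp_subset fun i hi => by
        by_contra hiT
        exact hi (by simp [hg1, restr, hiT])
      rw [← hTc]
      exact Finset.card_le_card this
    have hb1 : n2 (A.mulVec g1) ≤ Real.sqrt (1 + δ) * M := by
      refine le_trans (n2_mulVec_le hR hδ hspg1) ?_
      apply mul_le_mul_of_nonneg_left _ (Real.sqrt_nonneg _)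
      exact hM T (le_of_eq hTc)
    -- ℓ1 splitting
    have hl1split : ∑ i, |g i| = (∑ i, |g1 i|) + ∑ i, |g2 i| := by
      rw [← Finset.sum_add_distrib]
      apply Finset.sum_congr rfl
      intro i _
      rw [hg2 i]
      by_cases h : i ∈ T <;> simp [hg1, restr, h]
    -- combine
    have hgsplit : A.mulVec g = A.mulVec g1 + A.mulVec g2 := by
      rw [← Matrix.mulVec_add]
      congr 1
      funext i
      simp [hg2def]
    calc n2 (A.mulVec g) ≤ n2 (A.mulVec g1) + n2 (A.mulVec g2) := by
          rw [hgsplit]; exact n2_add_le _ _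
      _ ≤ Real.sqrt (1 + δ) * M + Real.sqrt (1 + δ) * (M' + (∑ i, |g2 i|) / Real.sqrt k) := by
          exact add_le_add hb1 hIH
      _ = Real.sqrt (1 + δ) * (M + ((∑ i, |g1 i|) + ∑ i, |g2 i|) / Real.sqrt k) := by
          rw [hM'def]
          field_simp
      _ = Real.sqrt (1 + δ) * (M + (∑ i, |g i|) / Real.sqrt k) := by rw [← hl1split]

lemma capped {N k : ℕ} (hk : 0 < k) (c V : Fin N → ℝ) (hc : ∀ i, 0 ≤ c i)
    (hV0 : ∀ i, 0 ≤ V i) (hV1 : ∀ i, V i ≤ 1) (hVs : ∑ i, V i ≤ (k : ℝ)) :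
    ∃ T : Finset (Fin N), T.card ≤ k ∧ ∑ i, c i * V i ≤ ∑ i ∈ T, c i := by
  by_cases hkn : k ≤ N
  · obtain ⟨T, _, hTc, hTop⟩ := topk c k Finset.univ (by simp [hkn])
    refine ⟨T, le_of_eq hTc, ?_⟩
    have hTne : T.Nonempty := by rw [← Finset.card_pos, hTc]; exact hk
    obtain ⟨i0, hi0T, hmin⟩ := Finset.exists_min_image T c hTne
    have hμ0 : 0 ≤ c i0 := hc i0
    have hsplit : ∑ i, c i * V i = (∑ i ∈ T, c i * V i) + ∑ i ∈ Finset.univ \ T, c i * V i := by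
      rw [add_comm]
      exact (Finset.sum_sdiff (Finset.subset_univ T)).symm
    have hVsplit : (∑ i ∈ T, V i) + ∑ i ∈ Finset.univ \ T, V i = ∑ i, V i := by
      rw [add_comm]
      exact Finset.sum_sdiff (Finset.subset_univ T)
    have htail : ∑ i ∈ Finset.univ \ T, c i * V i ≤ c i0 * ((k : ℝ) - ∑ i ∈ T, V i) := by
      calc ∑ i ∈ Finset.univ \ T, c i * V i ≤ ∑ i ∈ Finset.univ \ T, c i0 * V i := by
            apply Finset.sum_le_sum
            intro j hj
            exact mul_le_mul_of_nonneg_right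
              (hTop i0 hi0T j (by simpa using hj)) (hV0 j)
        _ = c i0 * ∑ i ∈ Finset.univ \ T, V i := by rw [Finset.mul_sum]
        _ ≤ c i0 * ((k : ℝ) - ∑ i ∈ T, V i) := by
            apply mul_le_mul_of_nonneg_left _ hμ0
            linarith
    have hhead : (∑ i ∈ T, c i * V i) + c i0 * ((k : ℝ) - ∑ i ∈ T, V i) ≤ ∑ i ∈ T, c i := by
      have hkT : (k : ℝ) = ∑ _i ∈ T, (1 : ℝ) := by
        rw [Finset.sum_const, hTc, nsmul_eq_mul, mul_one]
      rw [hkT, ← Finset.sum_sub_distrib, Finset.mul_sum, ← Finset.sum_add_distrib]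
      apply Finset.sum_le_sum
      intro i hi
      have h1 : c i0 * (1 - V i) ≤ c i * (1 - V i) :=
        mul_le_mul_of_nonneg_right (hmin i hi) (by linarith [hV1 i])
      nlinarith [hV1 i, hV0 i, hc i]
    linarith
  · refine ⟨Finset.univ, ?_, ?_⟩
    · simpa using le_of_not_ge hkn
    · apply Finset.sum_le_sum
      intro i _
      calc c i * V i ≤ c i * 1 := mul_le_mul_of_nonneg_left (hV1 i) (hc i)
        _ = c i := mul_one _

end Stmt8Aux

open Stmt8Aux

theorem stmt8
    {m n : ℕ} (A : Matrix (Fin m) (Fin n) ℝ)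
    (x : Fin n → ℝ) (ν y : Fin m → ℝ) (hy : y = A.mulVec x + ν)
    (k : ℕ) (hk : 0 < k)
    (S : Finset (Fin n)) (hS : IsTopK x k S)
    (ν' : Fin m → ℝ) (hν' : ν' = A.mulVec (restr x Sᶜ) + ν)
    (ω : ℕ) (hω : 1 ≤ ω)
    (δk δ3k : ℝ) (hδk : IsRIC A k δk) (hδ3k : IsRIC A (3 * k) δ3k)
    (wh : Fin n → ℝ) (hwh : InW k wh) (hsupp : supp (restr x S) ⊆ supp wh)
    (xp : Fin n → ℝ) (hxp : Sparse k xp)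
    (up : Fin n → ℝ) (hup : up = xp + A.transpose.mulVec (y - A.mulVec xp))
    (w : ℕ → Fin n → ℝ) (hw : SCM A y k ω up w) :
    ∀ i : ℕ, 1 ≤ i → i ≤ ω - 1 →
      n2 (A.mulVec ((up - restr x S) * (∏ l ∈ Finset.range i, w l)
            * ((1 : Fin n → ℝ) - wh)))
        ≤ 2 * δ3k * Real.sqrt (1 + δk) * n2 (restr x S - xp)
          + 2 * Real.sqrt (1 + δk) * n2 (A.transpose.mulVec ν') := by
  intro i hi1 hiω
  obtain ⟨⟨hδk0, hRk⟩, -⟩ := hδk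
  obtain ⟨⟨hδ3k0, hR3k⟩, -⟩ := hδ3k
  set xS : Fin n → ℝ := restr x S with hxSdef
  set h : Fin n → ℝ := xS - xp with hhdef
  set η : Fin n → ℝ := A.transpose.mulVec ν' with hηdef
  set ε : Fin n → ℝ := up - xS with hεdef
  set Q : Fin n → ℝ := ∏ l ∈ Finset.range i, w l with hQdef
  set V : Fin n → ℝ := fun j => Q j * (1 - wh j) with hVdef
  set g : Fin n → ℝ := fun j => ε j * V j with hgdef
  set M : ℝ := δ3k * n2 h + n2 η with hMdef
  -- index facts
  have hInP : ∀ l, l < i → InP k (w l) := by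
    intro l hl
    exact (hw l (by omega)).1
  have hQapp : ∀ jj, Q jj = ∏ l ∈ Finset.range i, w l jj := by
    intro jj
    rw [hQdef, Finset.prod_apply]
  have hQ0 : ∀ jj, 0 ≤ Q jj := by
    intro jj
    rw [hQapp]
    exact Finset.prod_nonneg fun l hl => ((hInP l (Finset.mem_range.mp hl)).2 jj).1
  have hQ1 : ∀ jj, Q jj ≤ 1 := by
    intro jj
    rw [hQapp]
    exact Finset.prod_le_one (fun l hl => ((hInP l (Finset.mem_range.mp hl)).2 jj).1)
      (fun l hl => ((hInP l (Finset.mem_range.mp hl)).2 jj).2)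
  have hwhb : ∀ jj, 0 ≤ 1 - wh jj ∧ 1 - wh jj ≤ 1 := by
    intro jj
    rcases hwh.1 jj with h0 | h1
    · rw [h0]; norm_num
    · rw [h1]; norm_num
  have hV0 : ∀ jj, 0 ≤ V jj := fun jj => mul_nonneg (hQ0 jj) (hwhb jj).1
  have hV1 : ∀ jj, V jj ≤ 1 := by
    intro jj
    calc V jj ≤ Q jj * 1 := mul_le_mul_of_nonneg_left (hwhb jj).2 (hQ0 jj)
      _ = Q jj := mul_one _
      _ ≤ 1 := hQ1 jj
  have hVQ : ∀ jj, V jj ≤ Q jj := by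
    intro jj
    calc V jj ≤ Q jj * 1 := mul_le_mul_of_nonneg_left (hwhb jj).2 (hQ0 jj)
      _ = Q jj := mul_one _
  have hQw0 : ∀ jj, Q jj ≤ w 0 jj := by
    intro jj
    rw [hQapp]
    have h0mem : (0 : ℕ) ∈ Finset.range i := Finset.mem_range.mpr (by omega)
    rw [← Finset.mul_prod_erase _ _ h0mem]
    have hle1 : ∏ l ∈ (Finset.range i).erase 0, w l jj ≤ 1 :=
      Finset.prod_le_one
        (fun l hl => ((hInP l (Finset.mem_range.mp (Finset.mem_of_mem_erase hl))).2 jj).1)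
        (fun l hl => ((hInP l (Finset.mem_range.mp (Finset.mem_of_mem_erase hl))).2 jj).2)
    have hw0 : 0 ≤ w 0 jj := ((hInP 0 (by omega)).2 jj).1
    calc w 0 jj * ∏ l ∈ (Finset.range i).erase 0, w l jj ≤ w 0 jj * 1 :=
          mul_le_mul_of_nonneg_left hle1 hw0
      _ = w 0 jj := mul_one _
  have hVs : ∑ jj, V jj ≤ (k : ℝ) := by
    calc ∑ jj, V jj ≤ ∑ jj, w 0 jj :=
          Finset.sum_le_sum fun jj _ => le_trans (hVQ jj) (hQw0 jj)
      _ = (k : ℝ) := (hInP 0 (by omega)).1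
  -- epsilon decomposition
  have hxsplit : x = xS + restr x Sᶜ := by
    funext jj
    by_cases hj : jj ∈ S <;> simp [hxSdef, restr, hj]
  have hyAxp : y - A.mulVec xp = A.mulVec h + ν' := by
    rw [hy, hν', hhdef, Matrix.mulVec_sub]
    conv_lhs => rw [hxsplit]
    rw [Matrix.mulVec_add]
    abel
  have hεeq : ε = -(h - A.transpose.mulVec (A.mulVec h)) + η := by
    rw [hεdef, hup, hyAxp, Matrix.mulVec_add]
    funext jj
    simp only [Pi.add_apply, Pi.sub_apply, Pi.neg_apply, hhdef, hηdef]
    ring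
  -- sparsity of h
  have hsupph : (supp h).card ≤ 2 * k := by
    have hsub : supp h ⊆ S ∪ supp xp := by
      refine supp_subset fun jj hjj => ?_
      by_cases hjS : jj ∈ S
      · exact Finset.mem_union_left _ hjS
      · refine Finset.mem_union_right _ (mem_supp.mpr ?_)
        intro hxp0
        apply hjj
        simp [hhdef, hxSdef, restr, hjS, hxp0]
    calc (supp h).card ≤ (S ∪ supp xp).card := Finset.card_le_card hsub
      _ ≤ S.card + (supp xp).card := Finset.card_union_le _ _
      _ ≤ k + k := add_le_add (le_of_eq hS.1) hxp
      _ = 2 * k := by ring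
  -- restriction bound
  have hMε : ∀ T : Finset (Fin n), T.card ≤ k → n2 (restr ε T) ≤ M := by
    intro T hT
    have hres : restr ε T = restr (-(h - A.transpose.mulVec (A.mulVec h))) T + restr η T := by
      funext jj
      rw [hεeq]
      simp only [restr, Pi.add_apply]
      split_ifs <;> simp
    have hneg : restr (-(h - A.transpose.mulVec (A.mulVec h))) T
        = -(restr (h - A.transpose.mulVec (A.mulVec h)) T) := by
      funext jj
      simp only [restr, Pi.neg_apply]
      split_ifs <;> simp
    have hb1 : n2 (restr (-(h - A.transpose.mulVec (A.mulVec h))) T) ≤ δ3k * n2 h := by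
      rw [hneg, n2_neg]
      exact lemmaR hR3k hδ3k0 h T (by omega)
    have hb2 : n2 (restr η T) ≤ n2 η := n2_mono (restr_abs_le η T)
    calc n2 (restr ε T)
        ≤ n2 (restr (-(h - A.transpose.mulVec (A.mulVec h))) T) + n2 (restr η T) := by
          rw [hres]; exact n2_add_le _ _
      _ ≤ δ3k * n2 h + n2 η := add_le_add hb1 hb2
  have hMg : ∀ T : Finset (Fin n), T.card ≤ k → n2 (restr g T) ≤ M := by
    intro T hT
    refine le_trans (n2_mono (f := restr g T) (g := restr ε T) ?_) (hMε T hT)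
    intro jj
    simp only [restr]
    split_ifs with hj
    · rw [hgdef]
      simp only []
      rw [abs_mul]
      calc |ε jj| * |V jj| ≤ |ε jj| * 1 := by
            apply mul_le_mul_of_nonneg_left _ (abs_nonneg _)
            rw [abs_of_nonneg (hV0 jj)]
            exact hV1 jj
        _ = |ε jj| := mul_one _
    · simp
  have hsqk : (0:ℝ) < Real.sqrt k := Real.sqrt_pos.mpr (by exact_mod_cast hk)
  -- ℓ1 bound
  have hl1 : ∑ jj, |g jj| ≤ Real.sqrt k * M := by
    have habs : ∀ jj, |g jj| = |ε jj| * V jj := by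
      intro jj
      rw [hgdef]
      simp only []
      rw [abs_mul, abs_of_nonneg (hV0 jj)]
    obtain ⟨T, hTk, hTle⟩ := capped hk (fun jj => |ε jj|) V (fun jj => abs_nonneg _)
      hV0 hV1 hVs
    have hcs : (∑ jj ∈ T, |ε jj|) ^ 2 ≤ (T.card : ℝ) * nsq (restr ε T) := by
      have hCS := Finset.sum_mul_sq_le_sq_mul_sq T (fun _ => (1:ℝ)) (fun jj => |ε jj|)
      have he1 : ∑ jj ∈ T, (fun _ => (1:ℝ)) jj * (fun jj => |ε jj|) jj = ∑ jj ∈ T, |ε jj| :=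
        Finset.sum_congr rfl fun jj _ => one_mul _
      have he2 : ∑ jj ∈ T, ((fun _ => (1:ℝ)) jj) ^ 2 = (T.card : ℝ) := by
        simp
      have he3 : ∑ jj ∈ T, ((fun jj => |ε jj|) jj) ^ 2 = nsq (restr ε T) := by
        rw [nsq_restr]
        exact Finset.sum_congr rfl fun jj _ => sq_abs _
      rw [he1, he2, he3] at hCS
      exact hCS
    have hsum_nonneg : 0 ≤ ∑ jj ∈ T, |ε jj| := Finset.sum_nonneg fun jj _ => abs_nonneg _
    have hT2 : ∑ jj ∈ T, |ε jj| ≤ Real.sqrt k * M := by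
      calc ∑ jj ∈ T, |ε jj| = Real.sqrt ((∑ jj ∈ T, |ε jj|) ^ 2) :=
            (Real.sqrt_sq hsum_nonneg).symm
        _ ≤ Real.sqrt ((T.card : ℝ) * nsq (restr ε T)) := Real.sqrt_le_sqrt hcs
        _ = Real.sqrt (T.card : ℝ) * n2 (restr ε T) := by
            rw [Real.sqrt_mul (Nat.cast_nonneg _)]; rfl
        _ ≤ Real.sqrt k * M := by
            apply mul_le_mul
            · exact Real.sqrt_le_sqrt (by exact_mod_cast hTk)
            · exact hMε T hTk
            · exact n2_nonneg _
            · exact Real.sqrt_nonneg _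
    calc ∑ jj, |g jj| = ∑ jj, |ε jj| * V jj := Finset.sum_congr rfl fun jj _ => habs jj
      _ ≤ ∑ jj ∈ T, |ε jj| := hTle
      _ ≤ Real.sqrt k * M := hT2
  -- apply NT
  have hcardn : (supp g).card ≤ n := by
    calc (supp g).card ≤ (Finset.univ : Finset (Fin n)).card :=
          Finset.card_le_card (Finset.subset_univ _)
      _ = n := by simp
  have hNT := NT hk hδk0 hRk n g M hcardn hMg
  have hgeq : (up - xS) * Q * ((1 : Fin n → ℝ) - wh) = g := by
    funext jj
    simp only [hgdef, hVdef, hεdef, Pi.mul_apply, Pi.sub_apply, Pi.one_apply]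
    ring
  rw [hgeq]
  have hdiv : (∑ jj, |g jj|) / Real.sqrt k ≤ M := by
    rw [div_le_iff₀ hsqk]
    calc ∑ jj, |g jj| ≤ Real.sqrt k * M := hl1
      _ = M * Real.sqrt k := mul_comm _ _
  calc n2 (A.mulVec g) ≤ Real.sqrt (1 + δk) * (M + (∑ jj, |g jj|) / Real.sqrt k) := hNT
    _ ≤ Real.sqrt (1 + δk) * (M + M) := by
        apply mul_le_mul_of_nonneg_left _ (Real.sqrt_nonneg _)
        linarith
    _ = 2 * δ3k * Real.sqrt (1 + δk) * n2 h + 2 * Real.sqrt (1 + δk) * n2 η := by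
        rw [hMdef]; ring
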